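/- Let (G, ω, μ) be a connected, locally finite weighted graph with a pseudo metric d of finite jump size whose balls are finite sets, and let V : G → ℝ with V(x) > 0 for all x ∈ G. Fix x₀ ∈ G and R̂ > 0, and suppose there exists h : G → ℝ with h(x) > 0 for all x ∈ G \ B_{R̂}(x₀), Δh(x) ≤ −V(x) for all x ∈ G \ B_{R̂}(x₀), and h(x) → 0 as d(x,x₀) → ∞. Then for every γ > 0 there exists a bounded function u : G → ℝ with Δu(x) − V(x)u(x) = 0 for all x ∈ G and u(x) → γ as d(x,x₀) → ∞ (i.e., for every ε > 0 there is R > 0 such that |u(x) − γ| ≤ ε whenever d(x,x₀) > R). In particular, there exist infinitely many bounded solutions of Δu − Vu = 0 on G. -/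

import Mathlib

open Finset Filter Topology

section Stmt11Aux

variable {G : Type*}
variable (μ : G → ℝ) (ω : G → G → ℝ) (V : G → ℝ)
variable (hloc : ∀ x : G, {y : G | 0 < ω x y}.Finite)

noncomputable def Nbr (x : G) : Finset G := (hloc x).toFinset

lemma mem_Nbr {x y : G} : y ∈ Nbr ω hloc x ↔ 0 < ω x y := (hloc x).mem_toFinset

noncomputable def Lop (f : G → ℝ) (x : G) : ℝ :=
  (∑ y ∈ Nbr ω hloc x, ω x y) * f x + μ x * V x * f x
    - ∑ y ∈ Nbr ω hloc x, ω x y * f y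

lemma omega_zero (hnn : ∀ x y, 0 ≤ ω x y) {x y : G} (hy : y ∉ Nbr ω hloc x) :
    ω x y = 0 :=
  le_antisymm (not_lt.mp (fun hh => hy ((mem_Nbr ω hloc).mpr hh))) (hnn x y)

lemma tsum_eq_lap (hnn : ∀ x y, 0 ≤ ω x y) (f : G → ℝ) (x : G) :
    ∑' y, ω x y * (f y - f x) =
      ∑ y ∈ Nbr ω hloc x, ω x y * f y - (∑ y ∈ Nbr ω hloc x, ω x y) * f x := by
  rw [tsum_eq_sum (s := Nbr ω hloc x)
    (fun b hb => by rw [omega_zero ω hloc hnn hb]; ring)]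
  rw [Finset.sum_mul, ← Finset.sum_sub_distrib]
  exact Finset.sum_congr rfl fun y _ => by ring

lemma eq_iff_Lop (hμ : ∀ x, 0 < μ x) (hnn : ∀ x y, 0 ≤ ω x y) (f : G → ℝ) (x : G) :
    (μ x)⁻¹ * (∑' y, ω x y * (f y - f x)) - V x * f x = 0 ↔
      Lop μ ω V hloc f x = 0 := by
  have hμx := (hμ x).ne'
  rw [tsum_eq_lap ω hloc hnn f x]
  unfold Lop
  rw [show (μ x)⁻¹ * (∑ y ∈ Nbr ω hloc x, ω x y * f y
        - (∑ y ∈ Nbr ω hloc x, ω x y) * f x) - V x * f x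
      = (μ x)⁻¹ * (-((∑ y ∈ Nbr ω hloc x, ω x y) * f x + μ x * V x * f x
        - ∑ y ∈ Nbr ω hloc x, ω x y * f y)) by field_simp; ring]
  rw [mul_eq_zero, neg_eq_zero]
  simp [inv_eq_zero, hμx]

lemma Lop_add_const (f : G → ℝ) (c : ℝ) (x : G) :
    Lop μ ω V hloc (fun y => c + f y) x = μ x * V x * c + Lop μ ω V hloc f x := by
  unfold Lop
  have e : ∀ y, ω x y * (c + f y) = ω x y * c + ω x y * f y := fun y => by ring
  simp_rw [e]
  rw [Finset.sum_add_distrib, ← Finset.sum_mul]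
  ring

lemma Lop_const_sub (f : G → ℝ) (c : ℝ) (x : G) :
    Lop μ ω V hloc (fun y => c - f y) x = μ x * V x * c - Lop μ ω V hloc f x := by
  unfold Lop
  have e : ∀ y, ω x y * (c - f y) = ω x y * c - ω x y * f y := fun y => by ring
  simp_rw [e]
  rw [Finset.sum_sub_distrib, ← Finset.sum_mul]
  ring

lemma Lop_sub' (f g : G → ℝ) (x : G) :
    Lop μ ω V hloc (fun y => f y - g y) x
      = Lop μ ω V hloc f x - Lop μ ω V hloc g x := by
  unfold Lop
  have e : ∀ y, ω x y * (f y - g y) = ω x y * f y - ω x y * g y := fun y => by ring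
  simp_rw [e]
  rw [Finset.sum_sub_distrib]
  ring

lemma Lop_affine (u hh : G → ℝ) (c C : ℝ) (x : G) :
    Lop μ ω V hloc (fun y => u y - (c - C * hh y)) x
      = Lop μ ω V hloc u x - μ x * V x * c + C * Lop μ ω V hloc hh x := by
  unfold Lop
  have e : ∀ y, ω x y * (u y - (c - C * hh y))
      = ω x y * u y - ω x y * c + C * (ω x y * hh y) := fun y => by ring
  simp_rw [e]
  rw [Finset.sum_add_distrib, Finset.sum_sub_distrib, ← Finset.mul_sum, ← Finset.sum_mul]
  ring

lemma minprinc (hμ : ∀ x, 0 < μ x) (hV : ∀ x, 0 < V x) (hnn : ∀ x y, 0 ≤ ω x y)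
    (F : Finset G) (w : G → ℝ)
    (hLw : ∀ x ∈ F, 0 ≤ Lop μ ω V hloc w x)
    (hbd : ∀ x ∈ F, ∀ y, 0 < ω x y → y ∉ F → 0 ≤ w y) :
    ∀ x ∈ F, 0 ≤ w x := by
  by_contra hcon
  push_neg at hcon
  obtain ⟨x1, hx1F, hx1⟩ := hcon
  obtain ⟨z, hzF, hz⟩ := F.exists_min_image w ⟨x1, hx1F⟩
  have hzneg : w z < 0 := lt_of_le_of_lt (hz x1 hx1F) hx1
  have key : (∑ y ∈ Nbr ω hloc z, ω z y) * w z ≤ ∑ y ∈ Nbr ω hloc z, ω z y * w y := by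
    rw [Finset.sum_mul]
    apply Finset.sum_le_sum
    intro y hy
    have hωy : 0 < ω z y := (mem_Nbr ω hloc).mp hy
    rcases em (y ∈ F) with hmem | hmem
    · exact mul_le_mul_of_nonneg_left (hz y hmem) (hnn z y)
    · exact mul_le_mul_of_nonneg_left (hzneg.le.trans (hbd z hzF y hωy hmem)) (hnn z y)
  have hL := hLw z hzF
  unfold Lop at hL
  nlinarith [mul_pos (mul_pos (hμ z) (hV z)) (neg_pos.mpr hzneg)]

lemma dirichlet (hμ : ∀ x, 0 < μ x) (hV : ∀ x, 0 < V x) (hnn : ∀ x y, 0 ≤ ω x y)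
    (F : Finset G) (γ : ℝ) :
    ∃ u : G → ℝ, (∀ y, y ∉ F → u y = γ) ∧ (∀ x ∈ F, Lop μ ω V hloc u x = 0) := by
  classical
  set ext : (↥F → ℝ) → G → ℝ := fun v y => if hy : y ∈ F then v ⟨y, hy⟩ else 0 with hext
  have ext_zero : ∀ v y, y ∉ F → ext v y = 0 := by
    intro v y hy; simp only [hext, dif_neg hy]
  have ext_app : ∀ v (x : ↥F), ext v ↑x = v x := by
    intro v x; simp only [hext, dif_pos x.2]
  have ext_add : ∀ v v' : ↥F → ℝ, ext (v + v') = fun y => ext v y + ext v' y := by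
    intro v v'; funext y; simp only [hext]; split <;> simp
  have ext_smul : ∀ (a : ℝ) (v : ↥F → ℝ), ext (a • v) = fun y => a * ext v y := by
    intro a v; funext y; simp only [hext]; split <;> simp
  let T : (↥F → ℝ) →ₗ[ℝ] (↥F → ℝ) :=
    { toFun := fun v x => Lop μ ω V hloc (ext v) ↑x
      map_add' := by
        intro v v'; funext x
        show Lop μ ω V hloc (ext (v + v')) ↑x = _
        rw [ext_add]
        have e : ∀ y, ω (↑x) y * (ext v y + ext v' y)
            = ω (↑x) y * ext v y + ω (↑x) y * ext v' y := fun y => by ring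
        unfold Lop
        simp_rw [e]
        rw [Finset.sum_add_distrib]
        show _ = Lop μ ω V hloc (ext v) ↑x + Lop μ ω V hloc (ext v') ↑x
        unfold Lop
        ring
      map_smul' := by
        intro a v; funext x
        show Lop μ ω V hloc (ext (a • v)) ↑x = _
        rw [ext_smul]
        have e : ∀ y, ω (↑x) y * (a * ext v y) = a * (ω (↑x) y * ext v y) :=
          fun y => by ring
        unfold Lop
        simp_rw [e]
        rw [← Finset.mul_sum]
        show _ = a • Lop μ ω V hloc (ext v) ↑x
        unfold Lop
        simp only [smul_eq_mul]
        ring }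
  have hTapp : ∀ (v : ↥F → ℝ) (x : ↥F), T v x = Lop μ ω V hloc (ext v) ↑x := fun _ _ => rfl
  have hinj : Function.Injective T := by
    rw [injective_iff_map_eq_zero]
    intro v hv
    have h1 : ∀ x ∈ F, 0 ≤ ext v x := by
      apply minprinc μ ω V hloc hμ hV hnn F
      · intro x hx
        have := congrFun hv ⟨x, hx⟩
        rw [hTapp] at this
        exact this.ge
      · intro x _ y _ hy
        rw [ext_zero v y hy]
    have h2 : ∀ x ∈ F, 0 ≤ ext (-v) x := by
      apply minprinc μ ω V hloc hμ hV hnn F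
      · intro x hx
        have hneg : T (-v) = 0 := by rw [map_neg, hv, neg_zero]
        have := congrFun hneg ⟨x, hx⟩
        rw [hTapp] at this
        exact this.ge
      · intro x _ y _ hy
        rw [ext_zero (-v) y hy]
    funext x
    have ha := h1 ↑x x.2
    have hb := h2 ↑x x.2
    rw [ext_app] at ha
    rw [show ext (-v) ↑x = -(v x) from by rw [ext_app]; rfl] at hb
    have : v x = 0 := le_antisymm (by linarith) ha
    simpa using this
  have hsurj : Function.Surjective T := LinearMap.injective_iff_surjective.mp hinj
  obtain ⟨v, hvb⟩ := hsurj (fun x => -(μ ↑x * V ↑x * γ))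
  refine ⟨fun y => γ + ext v y, ?_, ?_⟩
  · intro y hy
    show γ + ext v y = γ
    rw [ext_zero v y hy, add_zero]
  · intro x hx
    rw [Lop_add_const μ ω V hloc (ext v) γ x]
    have := congrFun hvb ⟨x, hx⟩
    rw [hTapp] at this
    simp only at this
    rw [this]
    ring

lemma dir_bounds (hμ : ∀ x, 0 < μ x) (hV : ∀ x, 0 < V x) (hnn : ∀ x y, 0 ≤ ω x y)
    (F : Finset G) (γ : ℝ) (hγ : 0 ≤ γ) (u : G → ℝ)
    (hb : ∀ y, y ∉ F → u y = γ) (he : ∀ x ∈ F, Lop μ ω V hloc u x = 0) :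
    ∀ y, 0 ≤ u y ∧ u y ≤ γ := by
  have hlow : ∀ x ∈ F, 0 ≤ u x := by
    apply minprinc μ ω V hloc hμ hV hnn F
    · intro x hx; exact (he x hx).ge
    · intro x _ y _ hy; rw [hb y hy]; exact hγ
  have hupp : ∀ x ∈ F, 0 ≤ γ - u x := by
    have := minprinc μ ω V hloc hμ hV hnn F (fun y => γ - u y)
      (fun x hx => by
        rw [Lop_const_sub μ ω V hloc u γ x, he x hx, sub_zero]
        exact mul_nonneg (mul_nonneg (hμ x).le (hV x).le) hγ)
      (fun x _ y _ hy => by rw [hb y hy, sub_self])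
    exact this
  intro y
  by_cases hy : y ∈ F
  · exact ⟨hlow y hy, by linarith [hupp y hy]⟩
  · rw [hb y hy]; exact ⟨hγ, le_refl _⟩

lemma dir_Lop_nonneg (hμ : ∀ x, 0 < μ x) (hV : ∀ x, 0 < V x) (hnn : ∀ x y, 0 ≤ ω x y)
    (F : Finset G) (γ : ℝ) (hγ : 0 ≤ γ) (u : G → ℝ)
    (hb : ∀ y, y ∉ F → u y = γ) (he : ∀ x ∈ F, Lop μ ω V hloc u x = 0) :
    ∀ x, 0 ≤ Lop μ ω V hloc u x := by
  intro x
  by_cases hx : x ∈ F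
  · exact (he x hx).ge
  · have hub := fun y => (dir_bounds μ ω V hloc hμ hV hnn F γ hγ u hb he y).2
    unfold Lop
    rw [hb x hx]
    have hsum : ∑ y ∈ Nbr ω hloc x, ω x y * u y
        ≤ (∑ y ∈ Nbr ω hloc x, ω x y) * γ := by
      rw [Finset.sum_mul]
      exact Finset.sum_le_sum fun y _ => mul_le_mul_of_nonneg_left (hub y) (hnn x y)
    nlinarith [mul_nonneg (mul_nonneg (hμ x).le (hV x).le) hγ]

lemma dir_mono (hμ : ∀ x, 0 < μ x) (hV : ∀ x, 0 < V x) (hnn : ∀ x y, 0 ≤ ω x y)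
    (F1 F2 : Finset G) (hsub : F1 ⊆ F2) (γ : ℝ) (hγ : 0 ≤ γ) (u1 u2 : G → ℝ)
    (hb1 : ∀ y, y ∉ F1 → u1 y = γ) (he1 : ∀ x ∈ F1, Lop μ ω V hloc u1 x = 0)
    (hb2 : ∀ y, y ∉ F2 → u2 y = γ) (he2 : ∀ x ∈ F2, Lop μ ω V hloc u2 x = 0) :
    ∀ y, u2 y ≤ u1 y := by
  have key := minprinc μ ω V hloc hμ hV hnn F2 (fun y => u1 y - u2 y)
    (fun x hx => by
      rw [Lop_sub' μ ω V hloc u1 u2 x, he2 x hx, sub_zero]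
      exact dir_Lop_nonneg μ ω V hloc hμ hV hnn F1 γ hγ u1 hb1 he1 x)
    (fun x _ y _ hy => by
      rw [hb2 y hy, hb1 y (fun hmem => hy (hsub hmem)), sub_self])
  intro y
  by_cases hy : y ∈ F2
  · have hk := key y hy
    linarith
  · rw [hb2 y hy, hb1 y (fun hmem => hy (hsub hmem))]

end Stmt11Aux


/-- **Proposition 7.1** (general non-uniqueness criterium). If there is a positive
supersolution `h` of `Δh ≤ −V` outside a ball, with `h → 0` at infinity, then for
every `γ > 0` there is a bounded solution `u` of `Δu − Vu = 0` with `u → γ` at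
infinity; in particular there are infinitely many bounded solutions. -/
theorem stmt11 {G : Type*} [Countable G] [Infinite G]
    (μ : G → ℝ) (ω : G → G → ℝ) (d : G → G → ℝ)
    (hμ : ∀ x, 0 < μ x)
    (hω_symm : ∀ x y, ω x y = ω y x)
    (hω_diag : ∀ x, ω x x = 0)
    (hω_nonneg : ∀ x y, 0 ≤ ω x y)
    (hω_sum : ∀ x, Summable fun y => ω x y)
    (hloc : ∀ x : G, {y : G | 0 < ω x y}.Finite)
    (hconn : ∀ x y : G, x ≠ y → ∃ (n : ℕ) (p : ℕ → G),
      p 0 = x ∧ p n = y ∧ ∀ i < n, 0 < ω (p i) (p (i + 1)))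
    (hd_symm : ∀ x y, d x y = d y x)
    (hd_diag : ∀ x, d x x = 0)
    (hd_nonneg : ∀ x y, 0 ≤ d x y)
    (hd_tri : ∀ x y z, d x y ≤ d x z + d z y)
    (s : ℝ) (hs : ∀ x y, 0 < ω x y → d x y ≤ s)
    (hballs : ∀ (x : G) (r : ℝ), {y : G | d y x < r}.Finite)
    (V : G → ℝ) (hV : ∀ x, 0 < V x)
    (x₀ : G) (Rhat : ℝ) (hRhat : 0 < Rhat)
    (h : G → ℝ)
    (hpos : ∀ x : G, Rhat ≤ d x x₀ → 0 < h x)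
    (hsuper : ∀ x : G, Rhat ≤ d x x₀ →
      (μ x)⁻¹ * (∑' y, ω x y * (h y - h x)) ≤ -V x)
    (hlim : ∀ ε > (0 : ℝ), ∃ R : ℝ, ∀ x : G, R < d x x₀ → |h x| ≤ ε) :
    (∀ γ : ℝ, 0 < γ → ∃ u : G → ℝ,
      (∃ C : ℝ, ∀ x, |u x| ≤ C) ∧
      (∀ x : G, (μ x)⁻¹ * (∑' y, ω x y * (u y - u x)) - V x * u x = 0) ∧
      (∀ ε > (0 : ℝ), ∃ R > (0 : ℝ), ∀ x : G, R < d x x₀ → |u x - γ| ≤ ε)) ∧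
    {u : G → ℝ | (∃ C : ℝ, ∀ x, |u x| ≤ C) ∧
      ∀ x : G, (μ x)⁻¹ * (∑' y, ω x y * (u y - u x)) - V x * u x = 0}.Infinite := by
  classical
  set s' : ℝ := max s 0 with hs'def
  have hs'0 : (0:ℝ) ≤ s' := le_max_right _ _
  have hs'edge : ∀ x y, 0 < ω x y → d x y ≤ s' :=
    fun x y hxy => (hs x y hxy).trans (le_max_left _ _)
  -- supersolution estimate
  have hLh : ∀ x : G, Rhat ≤ d x x₀ → μ x * V x * (1 + h x) ≤ Lop μ ω V hloc h x := by
    intro x hx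
    have h1 := hsuper x hx
    rw [tsum_eq_lap ω hloc hω_nonneg h x] at h1
    have h2 := mul_le_mul_of_nonneg_left h1 (hμ x).le
    rw [← mul_assoc, mul_inv_cancel₀ (hμ x).ne', one_mul] at h2
    unfold Lop
    nlinarith
  -- exhaustion
  set F : ℕ → Finset G := fun n => (hballs x₀ (n : ℝ)).toFinset with hFdef
  have hmemF : ∀ (n : ℕ) (y : G), y ∈ F n ↔ d y x₀ < (n : ℝ) :=
    fun n y => Set.Finite.mem_toFinset _
  have hFmono : ∀ {n m : ℕ}, n ≤ m → F n ⊆ F m := by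
    intro n m hnm y hy
    rw [hmemF] at hy ⊢
    exact hy.trans_le (by exact_mod_cast hnm)
  have key : ∀ γ : ℝ, 0 < γ → ∃ u : G → ℝ,
      (∃ C : ℝ, ∀ x, |u x| ≤ C) ∧
      (∀ x : G, (μ x)⁻¹ * (∑' y, ω x y * (u y - u x)) - V x * u x = 0) ∧
      (∀ ε > (0 : ℝ), ∃ R > (0 : ℝ), ∀ x : G, R < d x x₀ → |u x - γ| ≤ ε) := by
    intro γ hγ
    have hdir := fun n : ℕ => dirichlet μ ω V hloc hμ hV hω_nonneg (F n) γ
    choose U hUb hUe using hdir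
    have hUbounds : ∀ n y, 0 ≤ U n y ∧ U n y ≤ γ := fun n =>
      dir_bounds μ ω V hloc hμ hV hω_nonneg (F n) γ hγ.le (U n) (hUb n) (hUe n)
    have hUanti : ∀ x : G, Antitone fun n => U n x := by
      intro x n m hnm
      exact dir_mono μ ω V hloc hμ hV hω_nonneg (F n) (F m) (hFmono hnm) γ hγ.le
        (U n) (U m) (hUb n) (hUe n) (hUb m) (hUe m) x
    let u : G → ℝ := fun x => ⨅ n, U n x
    have hbdd : ∀ x, BddBelow (Set.range fun n => U n x) := fun x =>
      ⟨0, by rintro a ⟨n, rfl⟩; exact (hUbounds n x).1⟩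
    have hTend : ∀ x, Tendsto (fun n => U n x) atTop (nhds (u x)) := fun x =>
      tendsto_atTop_ciInf (hUanti x) (hbdd x)
    have hu0 : ∀ x, 0 ≤ u x := fun x => le_ciInf fun n => (hUbounds n x).1
    have huγ : ∀ x, u x ≤ γ := fun x => (ciInf_le (hbdd x) 0).trans (hUbounds 0 x).2
    have hueq : ∀ x, Lop μ ω V hloc u x = 0 := by
      intro x
      obtain ⟨n₀, hn₀⟩ := exists_nat_gt (d x x₀)
      have big : Tendsto (fun n => Lop μ ω V hloc (U n) x) atTop
          (nhds (Lop μ ω V hloc u x)) := by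
        simp only [Lop]
        apply Tendsto.sub
        · exact ((hTend x).const_mul _).add ((hTend x).const_mul _)
        · exact tendsto_finset_sum _ fun y _ => (hTend y).const_mul _
      have evz : (fun n => Lop μ ω V hloc (U n) x) =ᶠ[atTop] fun _ => (0:ℝ) := by
        filter_upwards [eventually_ge_atTop n₀] with n hn
        apply hUe n x
        rw [hmemF]
        exact hn₀.trans_le (by exact_mod_cast hn)
      exact tendsto_nhds_unique big (tendsto_const_nhds.congr' evz.symm)
    -- the constant C
    set K : Finset G := ((hballs x₀ (Rhat + s')).toFinset).filter
      (fun y => Rhat ≤ d y x₀) with hKdef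
    obtain ⟨δ, hδ0, hδ⟩ : ∃ δ > (0:ℝ), ∀ y ∈ K, δ ≤ h y := by
      rcases K.eq_empty_or_nonempty with hKe | hKne
      · exact ⟨1, one_pos, by simp [hKe]⟩
      · obtain ⟨z, hzK, hz⟩ := K.exists_min_image h hKne
        have hzR : Rhat ≤ d z x₀ := (Finset.mem_filter.mp hzK).2
        exact ⟨h z, hpos z hzR, hz⟩
    set C : ℝ := max γ (γ / δ) with hCdef
    have hCγ : γ ≤ C := le_max_left _ _
    have hC0 : 0 < C := lt_of_lt_of_le hγ hCγ
    have hCK : ∀ y ∈ K, γ ≤ C * h y := by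
      intro y hy
      have h1 : γ / δ ≤ C := le_max_right _ _
      have h2 : δ ≤ h y := hδ y hy
      calc γ = (γ / δ) * δ := by field_simp
        _ ≤ C * h y := mul_le_mul h1 h2 hδ0.le hC0.le
    -- comparison from below on each F n
    have hcomp : ∀ (n : ℕ) (x : G), Rhat + s' ≤ d x x₀ → γ - C * h x ≤ U n x := by
      intro n x hx
      set A : Finset G := (F n).filter (fun z => Rhat + s' ≤ d z x₀) with hAdef
      have hint : ∀ z ∈ A, 0 ≤ Lop μ ω V hloc (fun y => U n y - (γ - C * h y)) z := by
        intro z hz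
        obtain ⟨hzF, hzd⟩ := Finset.mem_filter.mp hz
        rw [Lop_affine μ ω V hloc (U n) h γ C z, hUe n z hzF]
        have hzR : Rhat ≤ d z x₀ := by linarith
        have hLhz := hLh z hzR
        have hhz : 0 < h z := hpos z hzR
        nlinarith [mul_le_mul_of_nonneg_left hLhz hC0.le,
          mul_nonneg (sub_nonneg.mpr hCγ) (mul_pos (hμ z) (hV z)).le,
          mul_nonneg (mul_nonneg (mul_nonneg (hμ z).le (hV z).le) hC0.le) hhz.le]
      have hbnd : ∀ z ∈ A, ∀ y, 0 < ω z y → y ∉ A →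
          0 ≤ (fun y => U n y - (γ - C * h y)) y := by
        intro z hz y hωy hyA
        obtain ⟨hzF, hzd⟩ := Finset.mem_filter.mp hz
        have hdzy : d z y ≤ s' := hs'edge z y hωy
        have htri := hd_tri z x₀ y
        have hyR : Rhat ≤ d y x₀ := by linarith
        have hhy : 0 < h y := hpos y hyR
        simp only
        by_cases hyF : y ∈ F n
        · have hyK : y ∈ K := by
            rw [hKdef, Finset.mem_filter, Set.Finite.mem_toFinset]
            refine ⟨?_, hyR⟩
            have hcon : ¬ (Rhat + s' ≤ d y x₀) := fun hcon =>
              hyA (Finset.mem_filter.mpr ⟨hyF, hcon⟩)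
            exact lt_of_not_ge hcon
          have hK1 := hCK y hyK
          have hK2 := (hUbounds n y).1
          linarith
        · rw [hUb n y hyF]
          nlinarith [mul_pos hC0 hhy]
      have key2 := minprinc μ ω V hloc hμ hV hω_nonneg A
        (fun y => U n y - (γ - C * h y)) hint hbnd
      by_cases hxF : x ∈ F n
      · have hk := key2 x (Finset.mem_filter.mpr ⟨hxF, hx⟩)
        linarith
      · rw [hUb n x hxF]
        have hhx : 0 < h x := hpos x (by linarith)
        nlinarith [mul_pos hC0 hhx]
    have hulow : ∀ x : G, Rhat + s' ≤ d x x₀ → γ - C * h x ≤ u x := fun x hx =>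
      le_ciInf fun n => hcomp n x hx
    refine ⟨u, ⟨γ, fun x => abs_le.mpr ⟨by linarith [hu0 x], huγ x⟩⟩,
      fun x => (eq_iff_Lop μ ω V hloc hμ hω_nonneg u x).mpr (hueq x), ?_⟩
    intro ε hε
    obtain ⟨R₀, hR₀⟩ := hlim (ε / C) (div_pos hε hC0)
    refine ⟨max R₀ (Rhat + s'),
      lt_of_lt_of_le (by linarith) (le_max_right _ _), ?_⟩
    intro x hx
    have hx1 : Rhat + s' ≤ d x x₀ := le_of_lt (lt_of_le_of_lt (le_max_right R₀ _) hx)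
    have hx2 : R₀ < d x x₀ := lt_of_le_of_lt (le_max_left _ _) hx
    have hhx : h x ≤ ε / C := le_trans (le_abs_self _) (hR₀ x hx2)
    have hCh : C * h x ≤ ε := by
      have := (le_div_iff₀ hC0).mp hhx
      linarith
    rw [abs_le]
    exact ⟨by linarith [hulow x hx1], by linarith [huγ x]⟩
  refine ⟨key, ?_⟩
  have hfs : ∀ k : ℕ, ∃ u : G → ℝ,
      (∃ C : ℝ, ∀ x, |u x| ≤ C) ∧
      (∀ x : G, (μ x)⁻¹ * (∑' y, ω x y * (u y - u x)) - V x * u x = 0) ∧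
      (∀ ε > (0 : ℝ), ∃ R > (0 : ℝ), ∀ x : G, R < d x x₀ →
        |u x - ((k : ℝ) + 1)| ≤ ε) :=
    fun k => key ((k : ℝ) + 1) (by positivity)
  choose f hf1 hf2 hf3 using hfs
  apply Set.infinite_of_injective_forall_mem (f := f)
  · intro j k hjk
    by_contra hne
    have hab : ((j:ℝ)+1) ≠ ((k:ℝ)+1) := by
      intro hc
      apply hne
      have : (j:ℝ) = (k:ℝ) := by linarith
      exact_mod_cast this
    have hε : 0 < |((j:ℝ)+1) - ((k:ℝ)+1)| / 3 :=
      div_pos (abs_pos.mpr (sub_ne_zero.mpr hab)) (by norm_num)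
    obtain ⟨R₁, hR₁0, hR₁⟩ := hf3 j _ hε
    obtain ⟨R₂, hR₂0, hR₂⟩ := hf3 k _ hε
    obtain ⟨x, hx⟩ := (Set.Finite.infinite_compl
      (hballs x₀ (max R₁ R₂ + 1))).nonempty
    simp only [Set.mem_compl_iff, Set.mem_setOf_eq, not_lt] at hx
    have h1 := hR₁ x (by linarith [le_max_left R₁ R₂])
    have h2 := hR₂ x (by linarith [le_max_right R₁ R₂])
    rw [hjk] at h1
    have e1 := abs_le.mp h1
    have e2 := abs_le.mp h2
    have h3 : |((j:ℝ)+1) - ((k:ℝ)+1)| ≤ 2 * (|((j:ℝ)+1) - ((k:ℝ)+1)| / 3) := by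
      rw [abs_le]
      constructor <;> linarith
    linarith [abs_pos.mpr (sub_ne_zero.mpr hab)]
  · intro k
    exact ⟨hf1 k, hf2 k⟩
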